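/- Any weakly circumscribed convex polygon in the Euclidean plane with more than 4 edges is strongly circumscribed. That is, if P is a convex polygon with at least 5 edges such that the affine line spanned by each edge is tangent to the unit circle, then in fact the unit disk is contained in P and each edge touches the unit circle. -/

import Mathlib

set_option maxHeartbeats 1000000
open scoped RealInnerProductSpace
local notation "E" => EuclideanSpace ℝ (Fin 2)

lemma inner2 (x y : E) : ⟪x, y⟫ = x 0 * y 0 + x 1 * y 1 := by
  simp [PiLp.inner_apply, Fin.sum_univ_two, RCLike.inner_apply]; ring

noncomputable def Jv (u : E) : E := (WithLp.equiv 2 (Fin 2 → ℝ)).symm ![-(u 1), u 0]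

lemma Jv0 (u : E) : Jv u 0 = -(u 1) := rfl
lemma Jv1 (u : E) : Jv u 1 = u 0 := rfl

lemma inner_self_one {u : E} (hu : ‖u‖ = 1) : ⟪u, u⟫ = 1 := by
  rw [real_inner_self_eq_norm_sq, hu]; norm_num

lemma decomp {u : E} (hu : ‖u‖ = 1) (w : E) : w = ⟪u, w⟫ • u + ⟪Jv u, w⟫ • Jv u := by
  have h1 : u 0 * u 0 + u 1 * u 1 = 1 := by
    have := inner_self_one hu; rwa [inner2] at this
  refine PiLp.ext fun i => ?_
  have e0 : (⟪u, w⟫ • u + ⟪Jv u, w⟫ • Jv u) 0 = ⟪u, w⟫ * u 0 + ⟪Jv u, w⟫ * Jv u 0 := rfl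
  have e1 : (⟪u, w⟫ • u + ⟪Jv u, w⟫ • Jv u) 1 = ⟪u, w⟫ * u 1 + ⟪Jv u, w⟫ * Jv u 1 := rfl
  fin_cases i
  · show w 0 = _
    rw [show ((fun i => i) (⟨0,by norm_num⟩ : Fin 2)) = (0 : Fin 2) from rfl, e0,
      inner2, inner2]; simp only [Jv0, Jv1]; linear_combination (-(w 0)) * h1
  · show w 1 = _
    rw [show ((fun i => i) (⟨1,by norm_num⟩ : Fin 2)) = (1 : Fin 2) from rfl, e1,
      inner2, inner2]; simp only [Jv0, Jv1]; linear_combination (-(w 1)) * h1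

lemma inner_Jv_self (u : E) : ⟪u, Jv u⟫ = 0 := by
  rw [inner2, Jv0, Jv1]; ring

lemma finrankE : Module.finrank ℝ (EuclideanSpace ℝ (Fin 2)) = 2 := by
  simp [finrank_euclideanSpace]

lemma orth_rank {v : E} (hv : v ≠ 0) :
    Module.finrank ℝ ((ℝ ∙ v)ᗮ : Submodule ℝ (EuclideanSpace ℝ (Fin 2))) = 1 := by
  have h1 := Submodule.finrank_add_finrank_orthogonal (𝕜 := ℝ) (K := (ℝ ∙ v))
  rw [finrank_span_singleton hv, finrankE] at h1
  omega

lemma span_orth_eq {v d : E} (hv : v ≠ 0) (hd : d ≠ 0) (hvd : ⟪v, d⟫ = 0) :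
    (ℝ ∙ d) = (ℝ ∙ v)ᗮ := by
  apply Submodule.eq_of_le_of_finrank_eq
  · rw [Submodule.span_singleton_le_iff_mem]
    exact Submodule.mem_orthogonal_singleton_iff_inner_right.2 hvd
  · rw [finrank_span_singleton hd, orth_rank hv]

lemma mem_orth_line {v w : E} (hvw : ⟪v, w⟫ = 0) : w ∈ (ℝ ∙ v)ᗮ :=
  Submodule.mem_orthogonal_singleton_iff_inner_right.2 hvw

lemma rank_le_of_subset_line {s : Set E} {v : E} (hv : v ≠ 0) {c : ℝ}
    (h : ∀ x ∈ s, ⟪v, x⟫ = c) : Module.finrank ℝ (vectorSpan ℝ s) ≤ 1 := by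
  have hle : vectorSpan ℝ s ≤ (ℝ ∙ v)ᗮ := by
    rw [vectorSpan_def]
    apply Submodule.span_le.2
    rintro w ⟨x, hx, y, hy, rfl⟩
    apply mem_orth_line
    show ⟪v, x - y⟫ = 0
    rw [inner_sub_right, h x hx, h y hy, sub_self]
  calc Module.finrank ℝ (vectorSpan ℝ s) ≤ Module.finrank ℝ ((ℝ ∙ v)ᗮ : Submodule ℝ _) :=
        Submodule.finrank_mono hle
    _ = 1 := orth_rank hv

lemma two_points_of_rank_one {F : Set E}
    (hr : Module.finrank ℝ (affineSpan ℝ F).direction = 1) :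
    ∃ x ∈ F, ∃ y ∈ F, x ≠ y := by
  by_contra h
  push_neg at h
  have hsub : vectorSpan ℝ F ≤ ⊥ := by
    rw [vectorSpan_def]
    apply Submodule.span_le.2
    rintro w ⟨x, hx, y, hy, rfl⟩
    simp [h x hx y hy]
  rw [direction_affineSpan] at hr
  rw [le_bot_iff] at hsub
  rw [hsub] at hr
  simp at hr

lemma norm_one_of_sq {x : E} (h : ⟪x, x⟫ = 1) : ‖x‖ = 1 := by
  have := real_inner_self_eq_norm_sq x
  nlinarith [norm_nonneg x]

lemma tangent_char {F : Set E}
    (hr : Module.finrank ℝ (affineSpan ℝ F).direction = 1)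
    (ht : ∃! s : E, s ∈ (affineSpan ℝ F : Set E) ∧ ‖s‖ = 1) :
    ∃ v : E, ‖v‖ = 1 ∧ (affineSpan ℝ F : Set E) = {x | ⟪v, x⟫ = 1} := by
  obtain ⟨s, ⟨hsL, hs1⟩, huniq⟩ := ht
  have hss : ⟪s, s⟫ = 1 := by
    rw [real_inner_self_eq_norm_sq, hs1]; norm_num
  have hdir : (affineSpan ℝ F).direction ≠ ⊥ := by
    intro h; rw [h] at hr; simp at hr
  obtain ⟨d, hdmem, hd0⟩ := Submodule.ne_bot_iff _ |>.1 hdir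
  have hdd : ⟪d, d⟫ ≠ 0 := by
    simp only [ne_eq, inner_self_eq_zero]; exact hd0
  -- s is orthogonal to d
  have hsd : ⟪s, d⟫ = 0 := by
    by_contra hne
    set t : ℝ := -2 * ⟪s, d⟫ / ⟪d, d⟫ with ht
    have htd : t * ⟪d, d⟫ = -2 * ⟪s, d⟫ := by
      rw [ht, div_mul_cancel₀ _ hdd]
    have hmem : t • d +ᵥ s ∈ (affineSpan ℝ F : Set E) :=
      AffineSubspace.vadd_mem_of_mem_direction (Submodule.smul_mem _ t hdmem) hsL
    have hval : ⟪(t • d +ᵥ s : E), (t • d +ᵥ s : E)⟫ = 1 := by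
      have : (t • d +ᵥ s : E) = s + t • d := by
        simp [vadd_eq_add]; abel
      rw [this, real_inner_add_add_self, real_inner_smul_right, real_inner_smul_left,
        real_inner_smul_right, hss]
      linear_combination t * htd
    have heq : (t • d +ᵥ s : E) = s := huniq _ ⟨hmem, norm_one_of_sq hval⟩
    have h2 : t • d + s = s := by simpa [vadd_eq_add] using heq
    have h3 : t • d = 0 := by
      have := add_eq_right.1 h2
      exact this
    rcases smul_eq_zero.1 h3 with h | h
    · rw [ht] at h
      rcases div_eq_zero_iff.1 h with h' | h'
      · apply hne; linarith
      · exact hdd h'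
    · exact hd0 h
  have hs0 : s ≠ 0 := by
    intro h; rw [h] at hs1; simp at hs1
  have hdireq : (affineSpan ℝ F).direction = ℝ ∙ d := by
    symm
    apply Submodule.eq_of_le_of_finrank_eq
    · rw [Submodule.span_singleton_le_iff_mem]; exact hdmem
    · rw [finrank_span_singleton hd0, hr]
  refine ⟨s, hs1, ?_⟩
  ext x
  simp only [Set.mem_setOf_eq, SetLike.mem_coe]
  constructor
  · intro hx
    have hxd : x -ᵥ s ∈ (affineSpan ℝ F).direction :=
      AffineSubspace.vsub_mem_direction hx hsL
    rw [hdireq, Submodule.mem_span_singleton] at hxd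
    obtain ⟨c, hc⟩ := hxd
    have hc' : c • d = x - s := hc
    have : x = s + c • d := by rw [hc']; abel
    rw [this, inner_add_right, real_inner_smul_right, hsd, hss]; ring
  · intro hx
    have hxs : x - s ∈ (ℝ ∙ s)ᗮ := by
      apply mem_orth_line
      rw [inner_sub_right, hx, hss, sub_self]
    rw [← span_orth_eq hs0 hd0 hsd, ← hdireq] at hxs
    have hmem := AffineSubspace.vadd_mem_of_mem_direction hxs hsL
    have hxe : (x - s) +ᵥ s = x := by
      rw [vadd_eq_add]; abel
    rwa [hxe] at hmem

/-- The set of edges of a planar convex body `P`: its one-dimensional exposed faces. -/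
def edgeSet (P : Set (EuclideanSpace ℝ (Fin 2))) : Set (Set (EuclideanSpace ℝ (Fin 2))) :=
  {F | IsExposed ℝ P F ∧ Module.finrank ℝ (affineSpan ℝ F).direction = 1}

lemma edge_data {P F : Set E}
    (hdim : Module.finrank ℝ (affineSpan ℝ P).direction = 2)
    (hF : F ∈ edgeSet P)
    (ht : ∃! s : E, s ∈ (affineSpan ℝ F : Set E) ∧ ‖s‖ = 1) :
    ∃ v : E, ‖v‖ = 1 ∧ (affineSpan ℝ F : Set E) = {x | ⟪v, x⟫ = 1} ∧ F.Nonempty ∧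
      (∀ x ∈ F, ⟪v, x⟫ = 1) ∧ (P ∩ {x | ⟪v, x⟫ = 1} ⊆ F) ∧
      ((∀ x ∈ P, ⟪v, x⟫ ≤ 1) ∨ (∀ x ∈ P, 1 ≤ ⟪v, x⟫)) := by
  obtain ⟨hexp, hr⟩ := hF
  obtain ⟨v, hv1, hvline⟩ := tangent_char hr ht
  have hFline : ∀ x ∈ F, ⟪v, x⟫ = 1 := by
    intro x hx
    have : x ∈ (affineSpan ℝ F : Set E) := subset_affineSpan ℝ F hx
    rw [hvline] at this; exact this
  obtain ⟨x₀, hx₀, x₁, hx₁, hne⟩ := two_points_of_rank_one hr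
  have hFne : F.Nonempty := ⟨x₀, hx₀⟩
  obtain ⟨l, hl⟩ := hexp hFne
  set w : E := (InnerProductSpace.toDual ℝ (EuclideanSpace ℝ (Fin 2))).symm l with hwdef
  have hw : ∀ x : E, l x = ⟪w, x⟫ := by
    intro x
    rw [hwdef, ← InnerProductSpace.toDual_apply_apply,
      LinearIsometryEquiv.apply_symm_apply]
  have hx₀P : x₀ ∈ P ∧ ∀ y ∈ P, l y ≤ l x₀ := by rw [hl] at hx₀; exact hx₀
  have hx₁P : x₁ ∈ P ∧ ∀ y ∈ P, l y ≤ l x₁ := by rw [hl] at hx₁; exact hx₁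
  have hll : l x₀ = l x₁ := le_antisymm (hx₁P.2 x₀ hx₀P.1) (hx₀P.2 x₁ hx₁P.1)
  set d : E := x₁ - x₀ with hddef
  have hd0 : d ≠ 0 := by
    rw [hddef]; intro h
    exact hne (sub_eq_zero.1 h).symm
  have hv0 : v ≠ 0 := by intro h; rw [h] at hv1; simp at hv1
  have hvd : ⟪v, d⟫ = 0 := by
    rw [hddef, inner_sub_right, hFline x₁ hx₁, hFline x₀ hx₀, sub_self]
  have hwd : ⟪d, w⟫ = 0 := by
    rw [real_inner_comm]
    have h1 : ⟪w, x₁⟫ - ⟪w, x₀⟫ = 0 := by rw [← hw, ← hw, hll]; ring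
    rw [hddef, inner_sub_right]; linarith
  have hwspan : w ∈ (ℝ ∙ v) := by
    rw [span_orth_eq hd0 hv0 (by rw [real_inner_comm]; exact hvd)]
    exact mem_orth_line hwd
  obtain ⟨t, htw⟩ := Submodule.mem_span_singleton.1 hwspan
  have hlval : ∀ x : E, l x = t * ⟪v, x⟫ := by
    intro x
    rw [hw, ← htw, real_inner_smul_left]
  have ht0 : t ≠ 0 := by
    intro h
    have hFP : F = P := by
      rw [hl]
      ext x
      simp only [Set.mem_setOf_eq]
      constructor
      · exact fun hx => hx.1
      · intro hx
        refine ⟨hx, fun y hy => ?_⟩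
        rw [hlval, hlval, h]; ring_nf; exact le_refl _
    rw [hFP] at hr
    rw [hr] at hdim
    norm_num at hdim
  have hmax : ∀ y ∈ P, t * ⟪v, y⟫ ≤ t * 1 := by
    intro y hy
    have := hx₀P.2 y hy
    rw [hlval, hlval, hFline x₀ hx₀] at this
    exact this
  refine ⟨v, hv1, hvline, hFne, hFline, ?_, ?_⟩
  · rintro x ⟨hxP, hx1⟩
    rw [hl]
    refine ⟨hxP, fun y hy => ?_⟩
    have := hmax y hy
    rw [hlval, hlval]
    simp only [Set.mem_setOf_eq] at hx1
    rw [hx1]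
    exact this
  · rcases lt_or_gt_of_ne ht0 with hneg | hpos
    · right; intro x hx
      have := hmax x hx
      nlinarith
    · left; intro x hx
      have := hmax x hx
      nlinarith

lemma core_alg {t1 t2 x y : ℝ} (h : (1 - t2^2) * x + 2*t2*y = 1 + t2^2) :
    t2 * ((1 - t1^2)*x + 2*t1*y - (1 + t1^2)) = (t2 - t1) * ((1 + t1*t2)*x - 1 + t1*t2) := by
  linear_combination t1 * h

def EPred (P : Set E) (X Y : E → ℝ) (τ : ℝ) : Prop :=
  (∃ p ∈ P, (1 - τ^2) * X p + 2*τ* Y p = 1 + τ^2) ∧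
  ((∀ x ∈ P, (1 - τ^2) * X x + 2*τ* Y x ≤ 1 + τ^2) ∨
   (∀ x ∈ P, 1 + τ^2 ≤ (1 - τ^2) * X x + 2*τ* Y x))

lemma EP_neg {P : Set E} {X Y : E → ℝ} {τ : ℝ} (h : EPred P X Y τ) :
    EPred P X (fun p => -(Y p)) (-τ) := by
  obtain ⟨⟨p, hp, he⟩, hd⟩ := h
  constructor
  · exact ⟨p, hp, by ring_nf; ring_nf at he; linarith⟩
  · rcases hd with hd | hd
    · left; intro x hx; have := hd x hx; ring_nf; ring_nf at this; linarith
    · right; intro x hx; have := hd x hx; ring_nf; ring_nf at this; linarith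

/-- For a pair of same-sign tangent parameters `0 < a < b`, the edge with parameter `a`
must be a separating (bad) edge. -/
lemma pospair {P : Set E} {X Y : E → ℝ} (hX : ∀ p ∈ P, 1 ≤ X p) {a b : ℝ}
    (h0 : 0 < a) (hab : a < b) (ha : EPred P X Y a) (hb : EPred P X Y b) :
    ∀ x ∈ P, 1 + a^2 ≤ (1 - a^2) * X x + 2*a* Y x := by
  obtain ⟨⟨p, hp, he⟩, _⟩ := hb
  rcases ha.2 with hd | hd
  · exfalso
    have hcore := core_alg (t1 := a) (t2 := b) he
    have hXp := hX p hp
    have hle := hd p hp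
    have hb0 : 0 < b := h0.trans hab
    have hab0 : 0 < a * b := mul_pos h0 hb0
    have hbr : 2*(a*b) ≤ (1 + a*b) * X p - 1 + a*b := by
      nlinarith [mul_nonneg (by linarith : (0:ℝ) ≤ 1 + a*b) (by linarith : 0 ≤ X p - 1)]
    have hpos : 0 < (b - a) * ((1 + a*b) * X p - 1 + a*b) :=
      mul_pos (by linarith) (by linarith)
    nlinarith [hpos, hcore, mul_nonneg hb0.le
      (by linarith : 0 ≤ 1 + a^2 - ((1 - a^2) * X p + 2*a* Y p))]
  · exact hd

/-- Three same-sign tangent parameters are impossible. -/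
lemma threeA {P : Set E} {X Y : E → ℝ} (hX : ∀ p ∈ P, 1 ≤ X p) {a b c : ℝ}
    (h0 : 0 < a) (hab : a < b) (hbc : b < c)
    (ha : EPred P X Y a) (hb : EPred P X Y b) (hc : EPred P X Y c) : False := by
  have hbad := pospair hX (lt_trans h0 hab) hbc hb hc
  obtain ⟨⟨p, hp, he⟩, _⟩ := ha
  have hcore := core_alg (t1 := b) (t2 := a) he
  have hXp := hX p hp
  have hge := hbad p hp
  have hab0 : 0 < b * a := mul_pos (h0.trans hab) h0
  have hbr : 2*(b*a) ≤ (1 + b*a) * X p - 1 + b*a := by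
    nlinarith [mul_nonneg (by linarith : (0:ℝ) ≤ 1 + b*a) (by linarith : 0 ≤ X p - 1)]
  have hneg : (a - b) * ((1 + b*a) * X p - 1 + b*a) < 0 :=
    mul_neg_of_neg_of_pos (by linarith) (by linarith)
  nlinarith [hneg, hcore, mul_nonneg h0.le
    (by linarith : 0 ≤ (1 - b^2) * X p + 2*b* Y p - (1 + b^2))]

lemma sort3 {a b c : ℝ} (hab : a ≠ b) (hac : a ≠ c) (hbc : b ≠ c)
    (ha : 0 < a) (hb : 0 < b) (hc : 0 < c) :
    ∃ x y z : ℝ, 0 < x ∧ x < y ∧ y < z ∧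
      ({x, y, z} : Set ℝ) = {a, b, c} := by
  rcases lt_trichotomy a b with h1 | h1 | h1
  · rcases lt_trichotomy b c with h2 | h2 | h2
    · exact ⟨a, b, c, ha, h1, h2, rfl⟩
    · exact absurd h2 hbc
    · rcases lt_trichotomy a c with h3 | h3 | h3
      · exact ⟨a, c, b, ha, h3, h2, by ext x; simp; tauto⟩
      · exact absurd h3 hac
      · exact ⟨c, a, b, hc, h3, h1, by ext x; simp; tauto⟩
  · exact absurd h1 hab
  · rcases lt_trichotomy a c with h2 | h2 | h2
    · exact ⟨b, a, c, hb, h1, h2, by ext x; simp; tauto⟩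
    · exact absurd h2 hac
    · rcases lt_trichotomy b c with h3 | h3 | h3
      · exact ⟨b, c, a, hb, h3, h2, by ext x; simp; tauto⟩
      · exact absurd h3 hbc
      · exact ⟨c, b, a, hc, h3, h1, by ext x; simp; tauto⟩

lemma threeA' {P : Set E} {X Y : E → ℝ} (hX : ∀ p ∈ P, 1 ≤ X p) {a b c : ℝ}
    (hab : a ≠ b) (hac : a ≠ c) (hbc : b ≠ c)
    (ha0 : 0 < a) (hb0 : 0 < b) (hc0 : 0 < c)
    (ha : EPred P X Y a) (hb : EPred P X Y b) (hc : EPred P X Y c) : False := by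
  obtain ⟨x, y, z, hx, hxy, hyz, hset⟩ := sort3 hab hac hbc ha0 hb0 hc0
  have hmem : ∀ w ∈ ({x, y, z} : Set ℝ), EPred P X Y w := by
    rw [hset]; rintro w (rfl | rfl | rfl) <;> assumption
  exact threeA hX hx hxy hyz (hmem x (by simp)) (hmem y (by simp)) (hmem z (by simp))

lemma four_taus {P : Set E} {X Y : E → ℝ} (hX : ∀ p ∈ P, 1 ≤ X p)
    {q : E} (hqP : q ∈ P) (hq1 : X q = 1)
    (W : Finset ℝ) (hWcard : 4 ≤ W.card)
    (h0 : ∀ τ ∈ W, τ ≠ 0) (hEP : ∀ τ ∈ W, EPred P X Y τ) : False := by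
  classical
  set Wp := W.filter (fun τ => 0 < τ) with hWp
  set Wn := W.filter (fun τ => τ < 0) with hWn
  have hsplit : W.card = Wp.card + Wn.card := by
    rw [hWp, hWn, ← Finset.card_union_of_disjoint]
    · congr 1
      ext τ
      simp only [Finset.mem_union, Finset.mem_filter]
      constructor
      · intro h
        rcases lt_trichotomy τ 0 with h' | h' | h'
        · right; exact ⟨h, h'⟩
        · exact absurd h' (h0 τ h)
        · left; exact ⟨h, h'⟩
      · rintro (⟨h, _⟩ | ⟨h, _⟩) <;> exact h
    · rw [Finset.disjoint_left]
      rintro τ hτ hτ'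
      simp only [Finset.mem_filter] at hτ hτ'
      linarith [hτ.2, hτ'.2]
  -- symmetric data for negatives
  have hEPn : ∀ τ ∈ Wn, EPred P X (fun p => -(Y p)) (-τ) := by
    intro τ hτ
    exact EP_neg (hEP τ (Finset.mem_filter.1 hτ).1)
  have hthree : ¬ (3 ≤ Wp.card) := by
    intro h3
    obtain ⟨T, hT, hTcard⟩ := Finset.exists_subset_card_eq h3
    obtain ⟨a, b, c, hab, hac, hbc, rfl⟩ := Finset.card_eq_three.1 hTcard
    have hmem : ∀ w ∈ ({a, b, c} : Finset ℝ), 0 < w ∧ EPred P X Y w := by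
      intro w hw
      have hw' := hT hw
      rw [hWp, Finset.mem_filter] at hw'
      exact ⟨hw'.2, hEP w hw'.1⟩
    exact threeA' hX hab hac hbc (hmem a (by simp)).1 (hmem b (by simp)).1
      (hmem c (by simp)).1 (hmem a (by simp)).2 (hmem b (by simp)).2 (hmem c (by simp)).2
  have hthreen : ¬ (3 ≤ Wn.card) := by
    intro h3
    obtain ⟨T, hT, hTcard⟩ := Finset.exists_subset_card_eq h3
    obtain ⟨a, b, c, hab, hac, hbc, rfl⟩ := Finset.card_eq_three.1 hTcard
    have hmem : ∀ w ∈ ({a, b, c} : Finset ℝ), 0 < -w ∧ EPred P X (fun p => -(Y p)) (-w) := by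
      intro w hw
      have hw' := hT hw
      rw [hWn, Finset.mem_filter] at hw'
      exact ⟨by linarith [hw'.2], hEPn w (hT hw)⟩
    exact threeA' hX (by intro h; apply hab; linarith : -a ≠ -b)
      (by intro h; apply hac; linarith : -a ≠ -c) (by intro h; apply hbc; linarith : -b ≠ -c)
      (hmem a (by simp)).1 (hmem b (by simp)).1 (hmem c (by simp)).1
      (hmem a (by simp)).2 (hmem b (by simp)).2 (hmem c (by simp)).2
  have h2p : 2 ≤ Wp.card := by omega
  have h2n : 2 ≤ Wn.card := by omega
  obtain ⟨a, ha, b, hb, hab⟩ := Finset.one_lt_card.1 (by omega : 1 < Wp.card)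
  obtain ⟨c, hc, d, hd, hcd⟩ := Finset.one_lt_card.1 (by omega : 1 < Wn.card)
  have ha' := Finset.mem_filter.1 ha
  have hb' := Finset.mem_filter.1 hb
  have hc' := Finset.mem_filter.1 hc
  have hd' := Finset.mem_filter.1 hd
  -- let a be the smaller positive one
  have hpos : ∃ x y : ℝ, 0 < x ∧ x < y ∧ EPred P X Y x ∧ EPred P X Y y := by
    rcases lt_or_gt_of_ne hab with h | h
    · exact ⟨a, b, ha'.2, h, hEP a ha'.1, hEP b hb'.1⟩
    · exact ⟨b, a, hb'.2, h, hEP b hb'.1, hEP a ha'.1⟩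
  have hneg : ∃ x y : ℝ, 0 < x ∧ x < y ∧ EPred P X (fun p => -(Y p)) x ∧
      EPred P X (fun p => -(Y p)) y := by
    rcases lt_or_gt_of_ne hcd with h | h
    · exact ⟨-d, -c, by linarith [hd'.2], by linarith, hEPn d hd, hEPn c hc⟩
    · exact ⟨-c, -d, by linarith [hc'.2], by linarith, hEPn c hc, hEPn d hd⟩
  obtain ⟨x, y, hx0, hxy, hEx, hEy⟩ := hpos
  obtain ⟨x', y', hx0', hxy', hEx', hEy'⟩ := hneg
  have h1 := pospair hX hx0 hxy hEx hEy q hqP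
  have h2 := pospair hX hx0' hxy' hEx' hEy' q hqP
  rw [hq1] at h1 h2
  have h2' : 1 + x'^2 ≤ (1 - x'^2) * 1 + 2*x'*(-(Y q)) := h2
  have hy1 : x ≤ Y q := by nlinarith [h1, hx0]
  have hy2 : Y q ≤ -x' := by nlinarith [h2', hx0']
  linarith

section helpers
variable {u : E}

lemma tau_iden' {c s X Y : ℝ} (hcs : c^2 + s^2 = 1) :
    ((1+c)^2 - s^2)*X + 2*s*(1+c)*Y - ((1+c)^2 + s^2) = 2*(1+c)*((c*X + s*Y) - 1) := by
  linear_combination (-(X+1)) * hcs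

lemma tau_iden {c s X Y : ℝ} (hcs : c^2 + s^2 = 1) (hc : 1 + c ≠ 0) :
    (1 - (s/(1+c))^2) * X + 2*(s/(1+c))*Y - (1 + (s/(1+c))^2)
      = (2/(1+c)) * ((c*X + s*Y) - 1) := by
  have e1 : (1 - (s/(1+c))^2) * X + 2*(s/(1+c))*Y - (1 + (s/(1+c))^2)
      = (((1+c)^2 - s^2)*X + 2*s*(1+c)*Y - ((1+c)^2 + s^2))/(1+c)^2 := by
    field_simp
  rw [e1, tau_iden' hcs]
  field_simp

lemma tau_det {c s τ : ℝ} (h : c^2 + s^2 = 1) (hc : 0 < 1 + c) (ht : τ = s/(1+c)) :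
    c = (1-τ^2)/(1+τ^2) ∧ s = 2*τ/(1+τ^2) := by
  have hs : s = τ*(1+c) := by
    rw [ht]; field_simp
  have hfac : (1+c) * ((c-1) + τ^2*(1+c)) = 0 := by
    linear_combination h - (s + τ*(1+c))*hs
  have h2 : (c-1) + τ^2*(1+c) = 0 := by
    rcases mul_eq_zero.1 hfac with h' | h'
    · exact absurd h' hc.ne'
    · exact h'
  have htt : (0:ℝ) < 1 + τ^2 := by positivity
  constructor
  · field_simp
    linear_combination h2
  · rw [hs]; field_simp
    linear_combination τ * h2
end helpers


lemma expand_inner {u : E} (hu : ‖u‖ = 1) (v p : E) :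
    ⟪v, p⟫ = ⟪u, v⟫ * ⟪u, p⟫ + ⟪Jv u, v⟫ * ⟪Jv u, p⟫ := by
  conv_lhs => rw [decomp hu v]
  rw [inner_add_left, real_inner_smul_left, real_inner_smul_left]

lemma edge_inj {P F G : Set E} (hF : F ∈ edgeSet P) (hG : G ∈ edgeSet P) {v : E}
    (hFl : ∀ x ∈ F, ⟪v, x⟫ = 1) (hFs : P ∩ {x | ⟪v, x⟫ = 1} ⊆ F)
    (hGl : ∀ x ∈ G, ⟪v, x⟫ = 1) (hGs : P ∩ {x | ⟪v, x⟫ = 1} ⊆ G) : F = G := by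
  apply Set.Subset.antisymm
  · intro x hx; exact hGs ⟨hF.1.subset hx, hFl x hx⟩
  · intro x hx; exact hFs ⟨hG.1.subset hx, hGl x hx⟩

lemma bad_case {P : Set E}
    (hdim : Module.finrank ℝ (affineSpan ℝ P).direction = 2)
    (hcard : 5 ≤ (edgeSet P).ncard)
    (htan : ∀ F ∈ edgeSet P, ∃! s : E,
      s ∈ (affineSpan ℝ F : Set E) ∧ ‖s‖ = 1)
    {F₀ : Set E} (hF₀ : F₀ ∈ edgeSet P) {u : E} (hu1 : ‖u‖ = 1)
    (hlineF₀ : ∀ x ∈ F₀, ⟪u, x⟫ = 1) (hneF₀ : F₀.Nonempty)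
    (hsubF₀ : P ∩ {x | ⟪u, x⟫ = 1} ⊆ F₀)
    (hbad : ∀ x ∈ P, 1 ≤ ⟪u, x⟫) : False := by
  classical
  have hdata := fun (G : Set E) (hG : G ∈ edgeSet P) => edge_data hdim hG (htan G hG)
  choose v hv1 hvline hvne hvF hvsub hvdich using hdata
  set X : E → ℝ := fun p => ⟪u, p⟫ with hX
  set Y : E → ℝ := fun p => ⟪Jv u, p⟫ with hY
  set ττ : Set E → ℝ := fun G => if h : G ∈ edgeSet P then
      ⟪Jv u, v G h⟫ / (1 + ⟪u, v G h⟫) else 0 with hττ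
  have key : ∀ (G) (hG : G ∈ edgeSet P), G ≠ F₀ →
      (⟪u, v G hG⟫^2 + ⟪Jv u, v G hG⟫^2 = 1) ∧ 0 < 1 + ⟪u, v G hG⟫ ∧
      ⟪Jv u, v G hG⟫ ≠ 0 ∧ ττ G ≠ 0 ∧ EPred P X Y (ττ G) := by
    intro G hG hne
    set w : E := v G hG with hw
    set c : ℝ := ⟪u, w⟫ with hc
    set s : ℝ := ⟪Jv u, w⟫ with hs
    have h2 := expand_inner hu1 w w
    have h1 := inner_self_one (hv1 G hG)
    rw [h1] at h2
    have hcs : c^2 + s^2 = 1 := by rw [hc, hs]; linear_combination -h2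
    obtain ⟨p₁, hp₁⟩ := hvne G hG
    have hp₁P : p₁ ∈ P := hG.1.subset hp₁
    have hp₁w : ⟪w, p₁⟫ = 1 := hvF G hG p₁ hp₁
    have hvp : ∀ x : E, ⟪w, x⟫ = c * X x + s * Y x := fun x => expand_inner hu1 w x
    have hXp₁ : 1 ≤ X p₁ := hbad p₁ hp₁P
    have hc0 : 0 < 1 + c := by
      by_contra hle
      push_neg at hle
      have hs0 : s = 0 := by nlinarith
      have hcm : c = -1 := by nlinarith
      have := hvp p₁
      rw [hp₁w, hcm, hs0] at this
      simp at this
      linarith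
    have hs0 : s ≠ 0 := by
      intro hs0
      have hc1 : c = 1 := by nlinarith
      have hwu : w = u := by
        have hd := decomp hu1 w
        rw [← hc, ← hs, hc1, hs0] at hd
        simpa using hd
      apply hne
      apply edge_inj hG hF₀ (v := u)
      · intro x hx; have := hvF G hG x hx; rwa [← hw, hwu] at this
      · have := hvsub G hG; rwa [← hw, hwu] at this
      · exact hlineF₀
      · exact hsubF₀
    have hτval : ττ G = s / (1 + c) := by rw [hττ]; simp only [hG, dif_pos]; rfl
    have hτ0 : ττ G ≠ 0 := by
      rw [hτval]
      exact div_ne_zero hs0 hc0.ne'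
    refine ⟨hcs, hc0, hs0, hτ0, ?_, ?_⟩
    · -- the touching point
      refine ⟨p₁, hp₁P, ?_⟩
      have hiden := tau_iden (X := X p₁) (Y := Y p₁) hcs hc0.ne'
      rw [← hτval] at hiden
      have : c * X p₁ + s * Y p₁ = 1 := by rw [← hvp]; exact hp₁w
      rw [this] at hiden
      simp at hiden
      linarith
    · rcases hvdich G hG with hd | hd
      · left
        intro x hx
        have hiden := tau_iden (X := X x) (Y := Y x) hcs hc0.ne'
        rw [← hτval, ← hvp] at hiden
        have h2c : 0 < 2/(1+c) := by positivity
        have hnp : (2/(1+c)) * (⟪w, x⟫ - 1) ≤ 0 :=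
          mul_nonpos_of_nonneg_of_nonpos h2c.le (by linarith [hd x hx])
        linarith [hiden, hnp]
      · right
        intro x hx
        have hiden := tau_iden (X := X x) (Y := Y x) hcs hc0.ne'
        rw [← hτval, ← hvp] at hiden
        have h2c : 0 < 2/(1+c) := by positivity
        have hnp : 0 ≤ (2/(1+c)) * (⟪w, x⟫ - 1) :=
          mul_nonneg h2c.le (by linarith [hd x hx])
        linarith [hiden, hnp]
  -- extract at least 4 edges different from F₀
  obtain ⟨t, hts, htcard⟩ := Set.exists_subset_card_eq hcard
  have htfin : t.Finite := Set.finite_of_ncard_ne_zero (by omega)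
  set t' : Set (Set E) := t \ {F₀} with ht'
  have ht'fin : t'.Finite := htfin.diff
  have ht'sub : ∀ G ∈ t', G ∈ edgeSet P ∧ G ≠ F₀ := by
    intro G hG
    exact ⟨hts hG.1, by simpa using hG.2⟩
  have ht'card : 4 ≤ t'.ncard := by
    have hsubu : t ⊆ t' ∪ {F₀} := by
      intro G hG
      by_cases h : G = F₀
      · right; simp [h]
      · left; exact ⟨hG, by simpa using h⟩
    have h1 : t.ncard ≤ t'.ncard + 1 := by
      have ha := Set.ncard_le_ncard hsubu (ht'fin.union (Set.finite_singleton _))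
      have hb := Set.ncard_union_le t' ({F₀} : Set (Set E))
      rw [Set.ncard_singleton] at hb
      omega
    omega
  set W : Finset ℝ := ht'fin.toFinset.image ττ with hW
  have hinj : Set.InjOn ττ ht'fin.toFinset := by
    intro G hGm G' hGm' heq
    rw [Finset.mem_coe, Set.Finite.mem_toFinset] at hGm hGm'
    obtain ⟨hG, hGne⟩ := ht'sub G hGm
    obtain ⟨hG', hGne'⟩ := ht'sub G' hGm'
    obtain ⟨hcs, hc0, -, -, -⟩ := key G hG hGne
    obtain ⟨hcs', hc0', -, -, -⟩ := key G' hG' hGne'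
    have hτv : ττ G = ⟪Jv u, v G hG⟫ / (1 + ⟪u, v G hG⟫) := by
      rw [hττ]; simp only [hG, dif_pos]
    have hτv' : ττ G' = ⟪Jv u, v G' hG'⟫ / (1 + ⟪u, v G' hG'⟫) := by
      rw [hττ]; simp only [hG', dif_pos]
    obtain ⟨hcd, hsd⟩ := tau_det hcs hc0 hτv
    obtain ⟨hcd', hsd'⟩ := tau_det hcs' hc0' hτv'
    rw [heq] at hcd hsd
    have hveq : v G hG = v G' hG' := by
      have e1 := decomp hu1 (v G hG)
      have e2 := decomp hu1 (v G' hG')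
      rw [hcd, hsd] at e1
      rw [hcd', hsd'] at e2
      rw [e1, e2]
    apply edge_inj hG hG' (v := v G hG)
    · exact hvF G hG
    · exact hvsub G hG
    · intro x hx; have := hvF G' hG' x hx; rwa [← hveq] at this
    · have := hvsub G' hG'; rwa [← hveq] at this
  have hWcard : 4 ≤ W.card := by
    rw [hW, Finset.card_image_of_injOn hinj, ← Set.ncard_eq_toFinset_card _ ht'fin]
    exact ht'card
  obtain ⟨q₀, hq₀⟩ := hneF₀
  have hq₀P : q₀ ∈ P := hF₀.1.subset hq₀
  have hq₀X : X q₀ = 1 := hlineF₀ q₀ hq₀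
  apply four_taus (X := X) (Y := Y) (fun p hp => hbad p hp) hq₀P hq₀X W hWcard
  · intro τ hτ
    rw [hW, Finset.mem_image] at hτ
    obtain ⟨G, hGm, rfl⟩ := hτ
    rw [Set.Finite.mem_toFinset] at hGm
    obtain ⟨hG, hGne⟩ := ht'sub G hGm
    exact (key G hG hGne).2.2.2.1
  · intro τ hτ
    rw [hW, Finset.mem_image] at hτ
    obtain ⟨G, hGm, rfl⟩ := hτ
    rw [Set.Finite.mem_toFinset] at hGm
    obtain ⟨hG, hGne⟩ := ht'sub G hGm
    exact (key G hG hGne).2.2.2.2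


noncomputable def nn (φ : ℝ) : E := (WithLp.equiv 2 (Fin 2 → ℝ)).symm ![Real.cos φ, Real.sin φ]

lemma nn0 (φ : ℝ) : nn φ 0 = Real.cos φ := rfl
lemma nn1 (φ : ℝ) : nn φ 1 = Real.sin φ := rfl

lemma nn_inner (φ : ℝ) (q : E) : ⟪nn φ, q⟫ = Real.cos φ * q 0 + Real.sin φ * q 1 := by
  rw [inner2, nn0, nn1]

lemma nn_norm (φ : ℝ) : ‖nn φ‖ = 1 := by
  apply norm_one_of_sq
  rw [inner2, nn0, nn1]
  nlinarith [Real.sin_sq_add_cos_sq φ]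

lemma nn_cont (q : E) : Continuous fun φ => ⟪nn φ, q⟫ := by
  simp only [nn_inner]
  fun_prop

lemma nn_pi (φ : ℝ) : nn (φ + Real.pi) = - nn φ := by
  refine PiLp.ext fun i => ?_
  have h0 : (-nn φ) 0 = -(nn φ 0) := rfl
  have h1 : (-nn φ) 1 = -(nn φ 1) := rfl
  fin_cases i
  · show nn (φ + Real.pi) 0 = (-nn φ) 0
    rw [h0, nn0, nn0, Real.cos_add_pi]
  · show nn (φ + Real.pi) 1 = (-nn φ) 1
    rw [h1, nn1, nn1, Real.sin_add_pi]

lemma line_vec_unique {v w : E} (hv : ‖v‖ = 1) (hw : ‖w‖ = 1)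
    (h : {x : E | ⟪v, x⟫ = 1} = {x | ⟪w, x⟫ = 1}) : v = w := by
  have hvv := inner_self_one hv
  have hww := inner_self_one hw
  have h1 : ⟪w, v⟫ = 1 := by
    have : v ∈ {x : E | ⟪v, x⟫ = 1} := hvv
    rw [h] at this; exact this
  have h2 : ⟪v, w⟫ = 1 := by
    have : w ∈ {x : E | ⟪w, x⟫ = 1} := hww
    rw [← h] at this; exact this
  have hz : ⟪v - w, v - w⟫ = 0 := by
    rw [inner_sub_left, inner_sub_right, inner_sub_right, hvv, hww, h1, h2]
    ring
  exact sub_eq_zero.1 (inner_self_eq_zero.1 hz)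

lemma exists_angle {x : E} (hx : ‖x‖ = 1) : ∃ φ : ℝ, nn φ = x := by
  have hxx := inner_self_one hx
  rw [inner2] at hxx
  have hx0 : -1 ≤ x 0 := by nlinarith
  have hx0' : x 0 ≤ 1 := by nlinarith
  rcases le_or_gt 0 (x 1) with hb | hb
  · refine ⟨Real.arccos (x 0), PiLp.ext fun i => ?_⟩
    fin_cases i
    · show nn _ 0 = x 0
      rw [nn0, Real.cos_arccos hx0 hx0']
    · show nn _ 1 = x 1
      rw [nn1, Real.sin_arccos]
      rw [show 1 - x 0 ^ 2 = (x 1)^2 by nlinarith]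
      exact Real.sqrt_sq hb
  · refine ⟨-Real.arccos (x 0), PiLp.ext fun i => ?_⟩
    fin_cases i
    · show nn _ 0 = x 0
      rw [nn0, Real.cos_neg, Real.cos_arccos hx0 hx0']
    · show nn _ 1 = x 1
      rw [nn1, Real.sin_neg, Real.sin_arccos]
      rw [show 1 - x 0 ^ 2 = (x 1)^2 by nlinarith]
      rw [show ((x 1)^2 : ℝ) = (-(x 1))^2 by ring, Real.sqrt_sq (by linarith)]
      ring

/-- Sweep lemma: rotating from a direction where `p₀` is the strict maximizer, we find a
direction in which `p₀` is a maximizer tied with another vertex; at such a direction the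
support value is 1 by the star property. -/
lemma sweep {n : ℝ → E} (hcont : ∀ q : E, Continuous fun φ => ⟪n φ, q⟫)
    (hpi : ∀ φ, n (φ + Real.pi) = -n φ)
    (V : Finset E) {p₀ : E}
    {φ₀ : ℝ} (hmax : ∀ q ∈ V, ⟪n φ₀, q⟫ ≤ ⟪n φ₀, p₀⟫)
    (hstrict : ∀ q ∈ V, q ≠ p₀ → ⟪n φ₀, q⟫ < ⟪n φ₀, p₀⟫)
    (hex : ∃ q ∈ V, q ≠ p₀)
    (star : ∀ φ, (∀ q ∈ V, ⟪n φ, q⟫ ≤ ⟪n φ, p₀⟫) →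
      (∃ q ∈ V, q ≠ p₀ ∧ ⟪n φ, q⟫ = ⟪n φ, p₀⟫) → ⟪n φ, p₀⟫ = 1) :
    ∃ ψ, φ₀ ≤ ψ ∧ ψ < φ₀ + Real.pi ∧ ⟪n ψ, p₀⟫ = 1 ∧
      ∀ φ, φ₀ ≤ φ → φ ≤ ψ → ∀ q ∈ V, ⟪n φ, q⟫ ≤ ⟪n φ, p₀⟫ := by
  classical
  obtain ⟨q₁, hq₁V, hq₁ne⟩ := hex
  set Φ : Set ℝ := {φ | φ ∈ Set.Icc φ₀ (φ₀ + Real.pi) ∧ ∃ q ∈ V, ⟪n φ, p₀⟫ < ⟪n φ, q⟫}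
    with hΦ
  have hπpos : (0:ℝ) < Real.pi := Real.pi_pos
  have hΦmem : φ₀ + Real.pi ∈ Φ := by
    refine ⟨⟨by linarith, le_refl _⟩, q₁, hq₁V, ?_⟩
    rw [hpi φ₀, inner_neg_left, inner_neg_left]
    have := hstrict q₁ hq₁V hq₁ne
    linarith
  have hΦne : Φ.Nonempty := ⟨_, hΦmem⟩
  have hΦbdd : BddBelow Φ := ⟨φ₀, fun x hx => hx.1.1⟩
  set ψ := sInf Φ with hψ
  have hψ₀ : φ₀ ≤ ψ := le_csInf hΦne (fun x hx => hx.1.1)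
  have hψπ : ψ ≤ φ₀ + Real.pi := csInf_le hΦbdd hΦmem
  have hnotin : ∀ φ, φ₀ ≤ φ → φ < ψ → ∀ q ∈ V, ⟪n φ, q⟫ ≤ ⟪n φ, p₀⟫ := by
    intro φ h1 h2 q hq
    by_contra hlt
    push_neg at hlt
    have : φ ∈ Φ := ⟨⟨h1, by linarith⟩, q, hq, hlt⟩
    have := csInf_le hΦbdd this
    linarith
  have hmaxψ : ∀ q ∈ V, ⟪n ψ, q⟫ ≤ ⟪n ψ, p₀⟫ := by
    intro q hq
    rcases eq_or_lt_of_le hψ₀ with heq | hlt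
    · rw [← heq]; exact hmax q hq
    · have hclosed : IsClosed {φ : ℝ | ⟪n φ, q⟫ ≤ ⟪n φ, p₀⟫} :=
        isClosed_le (hcont q) (hcont p₀)
      have hsub : Set.Ico φ₀ ψ ⊆ {φ : ℝ | ⟪n φ, q⟫ ≤ ⟪n φ, p₀⟫} := by
        intro φ hφ
        exact hnotin φ hφ.1 hφ.2 q hq
      have : Set.Icc φ₀ ψ ⊆ {φ : ℝ | ⟪n φ, q⟫ ≤ ⟪n φ, p₀⟫} := by
        rw [← closure_Ico hlt.ne]
        exact closure_minimal hsub hclosed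
      exact this ⟨hψ₀, le_refl _⟩
  have htie : ∃ q ∈ V, q ≠ p₀ ∧ ⟪n ψ, q⟫ = ⟪n ψ, p₀⟫ := by
    by_contra hno
    push_neg at hno
    set U : Set ℝ := ⋂ q ∈ V.erase p₀, {φ | ⟪n φ, q⟫ < ⟪n φ, p₀⟫} with hU
    have hUopen : IsOpen U := by
      apply isOpen_biInter_finset
      intro q _
      exact isOpen_lt (hcont q) (hcont p₀)
    have hψU : ψ ∈ U := by
      rw [hU]
      refine Set.mem_iInter₂.2 fun q hq => ?_
      have hqV := Finset.mem_of_mem_erase hq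
      have hqne := Finset.ne_of_mem_erase hq
      exact lt_of_le_of_ne (hmaxψ q hqV) (hno q hqV hqne)
    obtain ⟨ε, hε, hball⟩ := Metric.isOpen_iff.1 hUopen ψ hψU
    have hlb : ∀ x ∈ Φ, ψ + ε ≤ x := by
      intro x hx
      have hxInf : ψ ≤ x := csInf_le hΦbdd hx
      by_contra hxlt
      push_neg at hxlt
      have hxball : x ∈ Metric.ball ψ ε := by
        rw [Metric.mem_ball, Real.dist_eq, abs_lt]
        constructor <;> linarith
      have hxU := hball hxball
      obtain ⟨-, q, hqV, hqlt⟩ := hx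
      have hqne : q ≠ p₀ := by
        intro h; rw [h] at hqlt; linarith
      have := Set.mem_iInter₂.1 hxU q (Finset.mem_erase.2 ⟨hqne, hqV⟩)
      simp only [Set.mem_setOf_eq] at this
      linarith
    have := le_csInf hΦne hlb
    rw [← hψ] at this
    linarith
  have hval := star ψ hmaxψ htie
  have hψπ' : ψ < φ₀ + Real.pi := by
    rcases lt_or_eq_of_le hψπ with h | h
    · exact h
    · exfalso
      obtain ⟨q, hqV, hqne, hqeq⟩ := htie
      rw [h, hpi φ₀, inner_neg_left, inner_neg_left] at hqeq
      have := hstrict q hqV hqne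
      linarith
  exact ⟨ψ, hψ₀, hψπ', hval, fun φ h1 h2 q hq => by
    rcases lt_or_eq_of_le h2 with h | h
    · exact hnotin φ h1 h q hq
    · rw [h]; exact hmaxψ q hq⟩


lemma vectorSpan_le_orth {s : Set E} {v : E} {c : ℝ}
    (h : ∀ x ∈ s, ⟪v, x⟫ = c) : vectorSpan ℝ s ≤ (ℝ ∙ v)ᗮ := by
  rw [vectorSpan_def]
  apply Submodule.span_le.2
  rintro w ⟨x, hx, y, hy, rfl⟩
  apply mem_orth_line
  show ⟪v, x - y⟫ = 0
  rw [inner_sub_right, h x hx, h y hy, sub_self]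

lemma star_prop {V : Finset E} {P : Set E} (hP : P = convexHull ℝ (V : Set E))
    (hdim : Module.finrank ℝ (affineSpan ℝ P).direction = 2)
    (htan : ∀ F ∈ edgeSet P, ∃! s : E, s ∈ (affineSpan ℝ F : Set E) ∧ ‖s‖ = 1)
    (hgood : ∀ (F : Set E), F ∈ edgeSet P → ∀ w : E, ‖w‖ = 1 →
      (affineSpan ℝ F : Set E) = {x | ⟪w, x⟫ = 1} → ∃ x ∈ P, ⟪w, x⟫ < 1)
    {m : E} (hm : ‖m‖ = 1) {p q : E} (hpV : p ∈ V) (hqV : q ∈ V) (hqp : q ≠ p)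
    (hmaxV : ∀ r ∈ V, ⟪m, r⟫ ≤ ⟪m, p⟫) (htie : ⟪m, q⟫ = ⟪m, p⟫) :
    ⟪m, p⟫ = 1 := by
  have hm0 : m ≠ 0 := by intro h; rw [h] at hm; simp at hm
  set c : ℝ := ⟪m, p⟫ with hc
  have hlin : IsLinearMap ℝ (fun x : E => ⟪m, x⟫) :=
    ⟨fun x y => inner_add_right m x y, fun r x => real_inner_smul_right m x r⟩
  have hPmax : ∀ x ∈ P, ⟪m, x⟫ ≤ c := by
    rw [hP]
    intro x hx
    have hsub : convexHull ℝ (V : Set E) ⊆ {x : E | ⟪m, x⟫ ≤ c} :=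
      convexHull_min (fun r hr => hmaxV r hr) (convex_halfSpace_le hlin c)
    exact hsub hx
  have hpP : p ∈ P := by rw [hP]; exact subset_convexHull ℝ _ hpV
  have hqP : q ∈ P := by rw [hP]; exact subset_convexHull ℝ _ hqV
  set F' : Set E := {x ∈ P | ∀ y ∈ P, ⟪m, y⟫ ≤ ⟪m, x⟫} with hF'
  have hexp : IsExposed ℝ P F' := by
    intro _
    refine ⟨innerSL ℝ m, ?_⟩
    rw [hF']
    ext x
    simp [innerSL_apply_apply]
  have hpF' : p ∈ F' := ⟨hpP, fun y hy => hPmax y hy⟩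
  have hqF' : q ∈ F' := ⟨hqP, fun y hy => by rw [htie]; exact hPmax y hy⟩
  have hF'line : ∀ x ∈ F', ⟪m, x⟫ = c :=
    fun x hx => le_antisymm (hPmax x hx.1) (hx.2 p hpP)
  have hqp0 : q - p ≠ 0 := fun h => hqp (sub_eq_zero.1 h)
  have hrank : Module.finrank ℝ (vectorSpan ℝ F') = 1 := by
    apply le_antisymm
    · calc Module.finrank ℝ (vectorSpan ℝ F')
          ≤ Module.finrank ℝ ((ℝ ∙ m)ᗮ : Submodule ℝ _) :=
            Submodule.finrank_mono (vectorSpan_le_orth hF'line)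
        _ = 1 := orth_rank hm0
    · have hle : (ℝ ∙ (q - p)) ≤ vectorSpan ℝ F' := by
        rw [Submodule.span_singleton_le_iff_mem]
        exact vsub_mem_vectorSpan ℝ hqF' hpF'
      calc 1 = Module.finrank ℝ (ℝ ∙ (q - p)) := (finrank_span_singleton hqp0).symm
        _ ≤ Module.finrank ℝ (vectorSpan ℝ F') := Submodule.finrank_mono hle
  have hrank' : Module.finrank ℝ (affineSpan ℝ F').direction = 1 := by
    rw [direction_affineSpan]; exact hrank
  have hF'edge : F' ∈ edgeSet P := ⟨hexp, hrank'⟩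
  obtain ⟨v', hv'1, hspan'⟩ := tangent_char hrank' (htan F' hF'edge)
  obtain ⟨x₀, hx₀P, hx₀lt⟩ := hgood F' hF'edge v' hv'1 hspan'
  -- affine span of F' is the line {⟪m,x⟫ = c}
  have hdireq : (affineSpan ℝ F').direction = (ℝ ∙ m)ᗮ := by
    apply Submodule.eq_of_le_of_finrank_eq
    · rw [direction_affineSpan]; exact vectorSpan_le_orth hF'line
    · rw [hrank', orth_rank hm0]
  have hpSpan : p ∈ affineSpan ℝ F' := subset_affineSpan ℝ F' hpF'
  have hspanm : (affineSpan ℝ F' : Set E) = {x | ⟪m, x⟫ = c} := by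
    ext x
    simp only [SetLike.mem_coe, Set.mem_setOf_eq]
    constructor
    · intro hx
      have hxd : x -ᵥ p ∈ (affineSpan ℝ F').direction :=
        AffineSubspace.vsub_mem_direction hx hpSpan
      rw [hdireq] at hxd
      have : ⟪m, x - p⟫ = 0 := Submodule.mem_orthogonal_singleton_iff_inner_right.1 hxd
      rw [inner_sub_right] at this
      linarith
    · intro hx
      have hxd : x - p ∈ (ℝ ∙ m)ᗮ := by
        apply mem_orth_line
        rw [inner_sub_right, hx, hc, sub_self]
      rw [← hdireq] at hxd
      have hmem := AffineSubspace.vadd_mem_of_mem_direction hxd hpSpan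
      have hxe : (x - p) +ᵥ p = x := by rw [vadd_eq_add]; abel
      rwa [hxe] at hmem
  have hlines : {x : E | ⟪v', x⟫ = 1} = {x : E | ⟪m, x⟫ = c} := by
    rw [← hspan', hspanm]
  have hpline : ⟪v', p⟫ = 1 := by
    have : p ∈ {x : E | ⟪m, x⟫ = c} := rfl
    rw [← hlines] at this; exact this
  have hv'span : v' ∈ (ℝ ∙ m) := by
    rw [← Submodule.orthogonal_orthogonal (ℝ ∙ m)]
    intro w hw
    have hw' : ⟪m, w⟫ = 0 := Submodule.mem_orthogonal_singleton_iff_inner_right.1 hw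
    have hpw : p + w ∈ {x : E | ⟪m, x⟫ = c} := by
      simp only [Set.mem_setOf_eq, inner_add_right, hw']
      rw [add_zero, hc]
    rw [← hlines] at hpw
    have hpw' : ⟪v', p + w⟫ = 1 := hpw
    rw [inner_add_right, hpline] at hpw'
    rw [real_inner_comm]
    linarith
  obtain ⟨t, htv⟩ := Submodule.mem_span_singleton.1 hv'span
  have htc : t * c = 1 := by
    rw [← hpline, ← htv, real_inner_smul_left]
  have habs : |t| = 1 := by
    have : ‖v'‖ = |t| * ‖m‖ := by rw [← htv, norm_smul, Real.norm_eq_abs]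
    rw [hv'1, hm] at this
    linarith
  rcases abs_eq (by norm_num : (0:ℝ) ≤ 1) |>.1 habs with ht1 | ht1
  · rw [ht1] at htc; linarith
  · exfalso
    rw [ht1] at htc
    have hcm : c = -1 := by linarith
    have : ⟪v', x₀⟫ = -⟪m, x₀⟫ := by rw [← htv, ht1, real_inner_smul_left]; ring
    rw [this] at hx₀lt
    have := hPmax x₀ hx₀P
    rw [hcm] at this
    linarith


lemma trig_comb_cos (x y z : ℝ) :
    Real.sin (z - y) * Real.cos x + Real.sin (y - x) * Real.cos z
      = Real.sin (z - x) * Real.cos y := by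
  rw [Real.sin_sub, Real.sin_sub, Real.sin_sub]; ring

lemma trig_comb_sin (x y z : ℝ) :
    Real.sin (z - y) * Real.sin x + Real.sin (y - x) * Real.sin z
      = Real.sin (z - x) * Real.sin y := by
  rw [Real.sin_sub, Real.sin_sub, Real.sin_sub]; ring

lemma nn_sub_pi (x : ℝ) : nn (x - Real.pi) = - nn x := by
  have h := nn_pi (x - Real.pi)
  rw [sub_add_cancel] at h
  rw [h, neg_neg]

lemma good_ball {V : Finset E} {P : Set E} (hP : P = convexHull ℝ (V : Set E))
    (hdim : Module.finrank ℝ (affineSpan ℝ P).direction = 2)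
    (htan : ∀ F ∈ edgeSet P, ∃! s : E, s ∈ (affineSpan ℝ F : Set E) ∧ ‖s‖ = 1)
    (hgood : ∀ (F : Set E), F ∈ edgeSet P → ∀ w : E, ‖w‖ = 1 →
      (affineSpan ℝ F : Set E) = {x | ⟪w, x⟫ = 1} → ∃ x ∈ P, ⟪w, x⟫ < 1) :
    Metric.closedBall (0 : EuclideanSpace ℝ (Fin 2)) 1 ⊆ P := by
  intro z hz
  rw [Metric.mem_closedBall, dist_zero_right] at hz
  by_contra hzP
  have hconv : Convex ℝ P := hP ▸ convex_convexHull ℝ _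
  have hclosed : IsClosed P := hP ▸ (V.finite_toSet).isClosed_convexHull ℝ
  obtain ⟨f, μ, hfP, hfz⟩ := geometric_hahn_banach_closed_point hconv hclosed hzP
  have hVspan : Module.finrank ℝ (vectorSpan ℝ (V : Set E)) = 2 := by
    rw [← direction_affineSpan, ← affineSpan_convexHull, ← hP]; exact hdim
  have hVne : (V : Set E).Nonempty := by
    by_contra h
    rw [Set.not_nonempty_iff_eq_empty] at h
    rw [h, vectorSpan_empty] at hVspan
    simp at hVspan
  obtain ⟨r₀, hr₀⟩ := hVne
  have hr₀P : r₀ ∈ P := by rw [hP]; exact subset_convexHull ℝ _ hr₀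
  set w : E := (InnerProductSpace.toDual ℝ (EuclideanSpace ℝ (Fin 2))).symm f with hwdef
  have hw : ∀ x : E, f x = ⟪w, x⟫ := by
    intro x
    rw [hwdef, ← InnerProductSpace.toDual_apply_apply, LinearIsometryEquiv.apply_symm_apply]
  have hw0 : w ≠ 0 := by
    intro h
    have h1 := hfP r₀ hr₀P
    have h2 := hfz
    rw [hw, h, inner_zero_left] at h1
    rw [hw, h, inner_zero_left] at h2
    linarith
  have hwn : 0 < ‖w‖ := norm_pos_iff.2 hw0
  set n₀ : E := ‖w‖⁻¹ • w with hn₀def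
  have hn₀ : ‖n₀‖ = 1 := norm_smul_inv_norm hw0
  have hVlt : ∀ p ∈ V, ⟪n₀, p⟫ < 1 := by
    intro p hp
    have hpP : p ∈ P := by rw [hP]; exact subset_convexHull ℝ _ hp
    have h1 : ⟪w, p⟫ < μ := by rw [← hw]; exact hfP p hpP
    have h2 : μ < ⟪w, z⟫ := by rw [← hw]; exact hfz
    have h3 : ⟪w, z⟫ ≤ ‖w‖ := by
      calc ⟪w, z⟫ ≤ ‖w‖ * ‖z‖ := real_inner_le_norm w z
        _ ≤ ‖w‖ * 1 := by nlinarith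
        _ = ‖w‖ := mul_one _
    have h4 : ⟪w, p⟫ < ‖w‖ := by linarith
    rw [hn₀def, real_inner_smul_left]
    calc ‖w‖⁻¹ * ⟪w, p⟫ < ‖w‖⁻¹ * ‖w‖ := by
          apply mul_lt_mul_of_pos_left h4 (inv_pos.2 hwn)
      _ = 1 := inv_mul_cancel₀ hwn.ne'
  obtain ⟨φ₀, hφ₀⟩ := exists_angle hn₀
  obtain ⟨p₀, hp₀V, hmax₀⟩ := V.exists_max_image (fun r => ⟪nn φ₀, r⟫)
    ⟨r₀, Finset.mem_coe.1 hr₀⟩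
  have hVlt' : ∀ p ∈ V, ⟪nn φ₀, p⟫ < 1 := by
    intro p hp; rw [hφ₀]; exact hVlt p hp
  have hstar : ∀ (m : E), ‖m‖ = 1 → (∀ r ∈ V, ⟪m, r⟫ ≤ ⟪m, p₀⟫) →
      (∃ q ∈ V, q ≠ p₀ ∧ ⟪m, q⟫ = ⟪m, p₀⟫) → ⟪m, p₀⟫ = 1 := by
    rintro m hm hmax ⟨q, hqV, hqne, hqeq⟩
    exact star_prop hP hdim htan hgood hm hp₀V hqV hqne hmax hqeq
  have hstrict : ∀ q ∈ V, q ≠ p₀ → ⟪nn φ₀, q⟫ < ⟪nn φ₀, p₀⟫ := by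
    intro q hq hne
    rcases lt_or_eq_of_le (hmax₀ q hq) with h | h
    · exact h
    · exfalso
      have := hstar (nn φ₀) (nn_norm φ₀) hmax₀ ⟨q, hq, hne, h⟩
      exact absurd this (ne_of_lt (hVlt' p₀ hp₀V))
  have hex : ∃ q ∈ V, q ≠ p₀ := by
    by_contra h
    push_neg at h
    have hle : vectorSpan ℝ (V : Set E) ≤ ⊥ := by
      rw [vectorSpan_def]
      apply Submodule.span_le.2
      rintro y ⟨x, hx, x', hx', rfl⟩
      have e1 : x = p₀ := h x hx
      have e2 : x' = p₀ := h x' hx'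
      simp [e1, e2]
    rw [le_bot_iff] at hle
    rw [hle] at hVspan
    simp at hVspan
  -- first sweep
  obtain ⟨ψp, hψp0, hψpπ, hψpval, hψpmax⟩ :=
    sweep nn_cont nn_pi V hmax₀ hstrict hex
      (fun φ hm ht => hstar (nn φ) (nn_norm φ) hm ht)
  -- second sweep, in the reversed direction
  have hcont2 : ∀ q : E, Continuous fun φ => ⟪nn (2*φ₀ - φ), q⟫ :=
    fun q => (nn_cont q).comp (by fun_prop)
  have hpi2 : ∀ φ, nn (2*φ₀ - (φ + Real.pi)) = - nn (2*φ₀ - φ) := by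
    intro φ
    rw [show 2*φ₀ - (φ + Real.pi) = (2*φ₀ - φ) - Real.pi by ring, nn_sub_pi]
  have heqφ₀ : (2*φ₀ - φ₀) = φ₀ := by ring
  have hmax₀' : ∀ q ∈ V, ⟪nn (2*φ₀ - φ₀), q⟫ ≤ ⟪nn (2*φ₀ - φ₀), p₀⟫ := by
    rw [heqφ₀]; exact hmax₀
  have hstrict' : ∀ q ∈ V, q ≠ p₀ → ⟪nn (2*φ₀ - φ₀), q⟫ < ⟪nn (2*φ₀ - φ₀), p₀⟫ := by
    rw [heqφ₀]; exact hstrict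
  obtain ⟨ψm', hψm0, hψmπ, hψmval, hψmmax⟩ :=
    sweep (n := fun φ => nn (2*φ₀ - φ)) hcont2 hpi2 V hmax₀' hstrict' hex
      (fun φ hm ht => hstar (nn (2*φ₀ - φ)) (nn_norm _) hm ht)
  obtain ⟨φm, hφm⟩ : ∃ t : ℝ, t = 2*φ₀ - ψm' := ⟨_, rfl⟩
  have hφm0 : φm ≤ φ₀ := by rw [hφm]; linarith
  have hφmπ : φ₀ - Real.pi < φm := by rw [hφm]; linarith
  have hφmval : ⟪nn φm, p₀⟫ = 1 := by rw [hφm]; exact hψmval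
  have hmaxI : ∀ φ, φm ≤ φ → φ ≤ ψp → ∀ q ∈ V, ⟪nn φ, q⟫ ≤ ⟪nn φ, p₀⟫ := by
    intro φ h1 h2 q hq
    rcases le_or_gt φ φ₀ with h | h
    · have h3 : φ₀ ≤ 2*φ₀ - φ := by linarith
      have h4 : 2*φ₀ - φ ≤ ψm' := by rw [hφm] at h1; linarith
      have := hψmmax (2*φ₀ - φ) h3 h4 q hq
      rwa [show 2*φ₀ - (2*φ₀ - φ) = φ by ring] at this
    · exact hψpmax φ h.le h2 q hq
  have harc : ψp - φm < Real.pi := by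
    by_contra hge
    push_neg at hge
    have hnn0 : nn φm ≠ 0 := by
      intro h
      have := nn_norm φm
      rw [h] at this
      simp at this
    have hall : ∀ x ∈ (V : Set E), ⟪nn φm, x⟫ = ⟪nn φm, p₀⟫ := by
      intro x hx
      have h1 := hmaxI φm (le_refl _) (by linarith [Real.pi_pos]) x hx
      have h2 := hmaxI (φm + Real.pi) (by linarith [Real.pi_pos]) (by linarith) x hx
      rw [nn_pi, inner_neg_left, inner_neg_left] at h2
      linarith
    have hle := vectorSpan_le_orth hall
    have := Submodule.finrank_mono hle
    rw [hVspan, orth_rank hnn0] at this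
    omega
  have hφmψp : φm < ψp := by
    rcases lt_or_eq_of_le (hφm0.trans hψp0) with h | h
    · exact h
    · exfalso
      have hle2 : ψp ≤ φ₀ := h ▸ hφm0
      have hφ₀ψ : φ₀ = ψp := le_antisymm hψp0 hle2
      rw [← hφ₀ψ] at hψpval
      exact absurd hψpval (ne_of_lt (hVlt' p₀ hp₀V))
  obtain ⟨D, hD⟩ : ∃ t : ℝ, t = Real.sin (ψp - φm) := ⟨_, rfl⟩
  have hden : 0 < D := by rw [hD]; exact Real.sin_pos_of_pos_of_lt_pi (by linarith) harc
  obtain ⟨a, ha⟩ : ∃ t : ℝ, t = Real.sin (ψp - φ₀) / D := ⟨_, rfl⟩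
  obtain ⟨b, hb⟩ : ∃ t : ℝ, t = Real.sin (φ₀ - φm) / D := ⟨_, rfl⟩
  have ha0 : 0 ≤ a := by
    rw [ha]
    exact div_nonneg (Real.sin_nonneg_of_nonneg_of_le_pi (by linarith) (by linarith)) hden.le
  have hb0 : 0 ≤ b := by
    rw [hb]
    exact div_nonneg (Real.sin_nonneg_of_nonneg_of_le_pi (by linarith) (by linarith)) hden.le
  have hcomb : nn φ₀ = a • nn φm + b • nn ψp := by
    have e0 : (a • nn φm + b • nn ψp) 0 = a * nn φm 0 + b * nn ψp 0 := rfl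
    have e1 : (a • nn φm + b • nn ψp) 1 = a * nn φm 1 + b * nn ψp 1 := rfl
    refine PiLp.ext fun i => ?_
    fin_cases i
    · show nn φ₀ 0 = (a • nn φm + b • nn ψp) 0
      have key := trig_comb_cos φm φ₀ ψp
      rw [e0, nn0, nn0, nn0, ha, hb]
      rw [div_mul_eq_mul_div, div_mul_eq_mul_div, ← add_div, eq_comm,
        div_eq_iff hden.ne', hD]
      linear_combination key
    · show nn φ₀ 1 = (a • nn φm + b • nn ψp) 1
      have key := trig_comb_sin φm φ₀ ψp
      rw [e1, nn1, nn1, nn1, ha, hb]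
      rw [div_mul_eq_mul_div, div_mul_eq_mul_div, ← add_div, eq_comm,
        div_eq_iff hden.ne', hD]
      linear_combination key
  have hval : ⟪nn φ₀, p₀⟫ = a * ⟪nn φm, p₀⟫ + b * ⟪nn ψp, p₀⟫ := by
    rw [hcomb, inner_add_left, real_inner_smul_left, real_inner_smul_left]
  rw [hφmval, hψpval, mul_one, mul_one] at hval
  have hnorm1 : (1:ℝ) ≤ a + b := by
    have h1 : ‖nn φ₀‖ ≤ ‖a • nn φm‖ + ‖b • nn ψp‖ := by
      rw [hcomb]; exact norm_add_le _ _
    rw [norm_smul, norm_smul, nn_norm, nn_norm, nn_norm, Real.norm_eq_abs,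
      Real.norm_eq_abs, abs_of_nonneg ha0, abs_of_nonneg hb0] at h1
    linarith
  have := hVlt' p₀ hp₀V
  linarith


theorem stmt11 (V : Finset (EuclideanSpace ℝ (Fin 2))) (P : Set (EuclideanSpace ℝ (Fin 2)))
    -- P is a convex polygon
    (hP : P = convexHull ℝ (V : Set (EuclideanSpace ℝ (Fin 2))))
    (hdim : Module.finrank ℝ (affineSpan ℝ P).direction = 2)
    -- with at least 5 edges
    (hcard : 5 ≤ (edgeSet P).ncard)
    -- weakly circumscribed: the line spanned by each edge is tangent to the unit circle
    (htan : ∀ F ∈ edgeSet P, ∃! s : EuclideanSpace ℝ (Fin 2),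
      s ∈ (affineSpan ℝ F : Set (EuclideanSpace ℝ (Fin 2))) ∧ ‖s‖ = 1) :
    -- then P is strongly circumscribed: the unit disk is contained in P and
    -- every edge touches the unit circle
    Metric.closedBall (0 : EuclideanSpace ℝ (Fin 2)) 1 ⊆ P ∧
      ∀ F ∈ edgeSet P, ∃ s ∈ F, ‖s‖ = 1 := by
  classical
  have hdata := fun (G : Set (EuclideanSpace ℝ (Fin 2))) (hG : G ∈ edgeSet P) =>
    edge_data hdim hG (htan G hG)
  choose v hv1 hvline hvne hvF hvsub hvdich using hdata
  by_cases hbad : ∃ F, ∃ hF : F ∈ edgeSet P, ∀ x ∈ P, 1 ≤ ⟪v F hF, x⟫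
  · obtain ⟨F₀, hF₀, hb⟩ := hbad
    exact absurd (bad_case hdim hcard htan hF₀ (hv1 F₀ hF₀) (hvF F₀ hF₀) (hvne F₀ hF₀)
      (hvsub F₀ hF₀) hb) (fun h => h)
  · push_neg at hbad
    have hgood : ∀ (F : Set (EuclideanSpace ℝ (Fin 2))), F ∈ edgeSet P →
        ∀ w : EuclideanSpace ℝ (Fin 2), ‖w‖ = 1 →
        (affineSpan ℝ F : Set (EuclideanSpace ℝ (Fin 2))) = {x | ⟪w, x⟫ = 1} →
        ∃ x ∈ P, ⟪w, x⟫ < 1 := by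
      intro F hF w hw hspan
      have hlineq : {x : EuclideanSpace ℝ (Fin 2) | ⟪w, x⟫ = 1}
          = {x | ⟪v F hF, x⟫ = 1} := by
        rw [← hspan, hvline F hF]
      have hwv : w = v F hF := line_vec_unique hw (hv1 F hF) hlineq
      rw [hwv]
      exact hbad F hF
    have hball := good_ball hP hdim htan hgood
    refine ⟨hball, ?_⟩
    intro F hF
    refine ⟨v F hF, ?_, hv1 F hF⟩
    apply hvsub F hF
    constructor
    · apply hball
      rw [Metric.mem_closedBall, dist_zero_right, hv1 F hF]
    · exact inner_self_one (hv1 F hF)
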